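/- Every convex continuous function f on [a,b] with f(a) = f(b) = 0 can be uniformly approximated by convex twice continuously differentiable functions g satisfying g(a) = g(b) = 0 and g''(a) = g''(b) = 0. -/

import Mathlib

open Set Filter Topology

noncomputable def cube (x : ℝ) : ℝ := max 0 x ^ 3
noncomputable def cube1 (x : ℝ) : ℝ := 3 * max 0 x ^ 2
noncomputable def Rh (h x : ℝ) : ℝ :=
  (cube x - 2 * cube (x - h) + cube (x - 2*h)) / (6 * h^2)
noncomputable def Rh1 (h x : ℝ) : ℝ :=
  (cube1 x - 2 * cube1 (x - h) + cube1 (x - 2*h)) / (6 * h^2)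
noncomputable def Rh2 (h x : ℝ) : ℝ :=
  (6 * max 0 x - 2 * (6 * max 0 (x - h)) + 6 * max 0 (x - 2*h)) / (6 * h^2)



lemma cube_hasDerivAt (x : ℝ) : HasDerivAt cube (3 * max 0 x ^ 2) x := by
  rcases lt_trichotomy x 0 with hx | hx | hx
  · have h0 : max (0:ℝ) x = 0 := max_eq_left hx.le
    rw [h0]
    have : HasDerivAt (fun _ : ℝ => (0:ℝ)) 0 x := hasDerivAt_const x 0
    refine this.congr_of_eventuallyEq ?_ |>.congr_deriv (by ring)
    filter_upwards [eventually_lt_nhds hx] with y hy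
    simp [cube, max_eq_left hy.le]
  · subst hx
    have hle : HasDerivWithinAt cube 0 (Iic (0:ℝ)) 0 := by
      refine (hasDerivWithinAt_const (0:ℝ) (Iic (0:ℝ)) 0).congr ?_ (by simp [cube])
      intro y hy; simp only [mem_Iic] at hy; simp [cube, max_eq_left hy]
    have hge : HasDerivWithinAt cube 0 (Ici (0:ℝ)) 0 := by
      have := (hasDerivAt_pow 3 (0:ℝ)).hasDerivWithinAt (s := Ici (0:ℝ))
      simp only [pow_succ, pow_zero, one_mul, mul_zero, zero_mul, Nat.cast_ofNat] at this
      refine this.congr ?_ (by simp [cube]) |>.congr_deriv (by ring)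
      intro y hy; simp only [mem_Ici] at hy; simp [cube, max_eq_right hy]; ring
    have := (hle.union hge)
    rw [Iic_union_Ici] at this
    simpa using this.hasDerivAt (by simp)
  · have h0 : max (0:ℝ) x = x := max_eq_right hx.le
    rw [h0]
    have : HasDerivAt (fun y : ℝ => y ^ 3) (3 * x ^ 2) x := by
      simpa using hasDerivAt_pow 3 x
    refine this.congr_of_eventuallyEq ?_
    filter_upwards [eventually_gt_nhds hx] with y hy
    simp [cube, max_eq_right hy.le]


lemma cube1_hasDerivAt (x : ℝ) : HasDerivAt cube1 (6 * max 0 x) x := by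
  rcases lt_trichotomy x 0 with hx | hx | hx
  · have h0 : max (0:ℝ) x = 0 := max_eq_left hx.le
    rw [h0]
    have : HasDerivAt (fun _ : ℝ => (0:ℝ)) 0 x := hasDerivAt_const x 0
    refine this.congr_of_eventuallyEq ?_ |>.congr_deriv (by ring)
    filter_upwards [eventually_lt_nhds hx] with y hy
    simp [cube1, max_eq_left hy.le]
  · subst hx
    have hle : HasDerivWithinAt cube1 0 (Iic (0:ℝ)) 0 := by
      refine (hasDerivWithinAt_const (0:ℝ) (Iic (0:ℝ)) 0).congr ?_ (by simp [cube1])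
      intro y hy; simp only [mem_Iic] at hy; simp [cube1, max_eq_left hy]
    have hge : HasDerivWithinAt cube1 0 (Ici (0:ℝ)) 0 := by
      have h2 : HasDerivAt (fun y : ℝ => 3 * y ^ 2) 0 0 := by
        simpa using (hasDerivAt_pow 2 (0:ℝ)).const_mul 3
      refine (h2.hasDerivWithinAt (s := Ici (0:ℝ))).congr ?_ (by simp [cube1])
      intro y hy; simp only [mem_Ici] at hy; simp [cube1, max_eq_right hy]
    have := (hle.union hge)
    rw [Iic_union_Ici] at this
    simpa using this.hasDerivAt (by simp)
  · have h0 : max (0:ℝ) x = x := max_eq_right hx.le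
    rw [h0]
    have h2 : HasDerivAt (fun y : ℝ => 3 * y ^ 2) (6 * x) x := by
      have := (hasDerivAt_pow 2 x).const_mul 3
      simpa [mul_comm, mul_assoc, mul_left_comm] using this.congr_deriv (by push_cast; ring)
    refine h2.congr_of_eventuallyEq ?_
    filter_upwards [eventually_gt_nhds hx] with y hy
    simp [cube1, max_eq_right hy.le]

lemma deriv_cube : deriv cube = cube1 := funext fun x => (cube_hasDerivAt x).deriv
lemma deriv_cube1 : deriv cube1 = fun x => 6 * max 0 x := funext fun x => (cube1_hasDerivAt x).deriv

lemma cube_contDiff : ContDiff ℝ 2 cube := by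
  have : ((2:ℕ) : WithTop ℕ∞) = 1 + 1 := by norm_num
  rw [show ContDiff ℝ 2 cube ↔ ContDiff ℝ (1+1) cube by norm_num, contDiff_succ_iff_deriv]
  refine ⟨fun x => (cube_hasDerivAt x).differentiableAt, by simp, ?_⟩
  rw [deriv_cube, contDiff_one_iff_deriv, deriv_cube1]
  exact ⟨fun x => (cube1_hasDerivAt x).differentiableAt,
    by fun_prop⟩

lemma cube_of_nonpos {x : ℝ} (hx : x ≤ 0) : cube x = 0 := by
  simp [cube, max_eq_left hx]

lemma cube_of_nonneg {x : ℝ} (hx : 0 ≤ x) : cube x = x ^ 3 := by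
  simp [cube, max_eq_right hx]




lemma cube_shift_hasDerivAt (c x : ℝ) :
    HasDerivAt (fun y => cube (y - c)) (cube1 (x - c)) x := by
  simpa [Function.comp_def, cube1] using (cube_hasDerivAt (x - c)).comp x ((hasDerivAt_id x).sub_const c)

lemma cube1_shift_hasDerivAt (c x : ℝ) :
    HasDerivAt (fun y => cube1 (y - c)) (6 * max 0 (x - c)) x := by
  simpa [Function.comp_def] using (cube1_hasDerivAt (x - c)).comp x ((hasDerivAt_id x).sub_const c)

lemma Rh_hasDerivAt (h x : ℝ) : HasDerivAt (Rh h) (Rh1 h x) x := by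
  have h1 : HasDerivAt (fun y => cube y - 2 * cube (y - h) + cube (y - 2*h))
      (cube1 x - 2 * cube1 (x - h) + cube1 (x - 2*h)) x := by
    exact ((cube_hasDerivAt x).sub
      ((cube_shift_hasDerivAt h x).const_mul 2)).add (cube_shift_hasDerivAt (2*h) x)
  exact h1.div_const (6 * h^2)

lemma Rh1_hasDerivAt (h x : ℝ) : HasDerivAt (Rh1 h) (Rh2 h x) x := by
  have h1 : HasDerivAt (fun y => cube1 y - 2 * cube1 (y - h) + cube1 (y - 2*h))
      (6 * max 0 x - 2 * (6 * max 0 (x - h)) + 6 * max 0 (x - 2*h)) x := by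
    exact ((cube1_hasDerivAt x).sub
      ((cube1_shift_hasDerivAt h x).const_mul 2)).add (cube1_shift_hasDerivAt (2*h) x)
  exact h1.div_const (6 * h^2)

lemma deriv_Rh (h : ℝ) : deriv (Rh h) = Rh1 h := funext fun x => (Rh_hasDerivAt h x).deriv
lemma deriv_Rh1 (h : ℝ) : deriv (Rh1 h) = Rh2 h := funext fun x => (Rh1_hasDerivAt h x).deriv

lemma Rh_contDiff (h : ℝ) : ContDiff ℝ 2 (Rh h) := by
  have hs : ∀ c : ℝ, ContDiff ℝ 2 (fun y : ℝ => cube (y - c)) :=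
    fun c => cube_contDiff.comp (contDiff_id.sub contDiff_const)
  have : Rh h = fun x => (cube x - 2 * cube (x - h) + cube (x - 2*h)) / (6 * h^2) := rfl
  rw [this]
  exact ((cube_contDiff.sub (contDiff_const.mul (hs h))).add (hs (2*h))).div_const _

lemma Rh2_nonneg {h : ℝ} (hh : 0 < h) (x : ℝ) : 0 ≤ Rh2 h x := by
  have hden : (0:ℝ) < 6 * h^2 := by positivity
  refine div_nonneg ?_ hden.le
  rcases le_total x 0 with h1 | h1
  · rw [max_eq_left h1, max_eq_left (by linarith), max_eq_left (by linarith)]; norm_num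
  rcases le_total x h with h2 | h2
  · rw [max_eq_right h1, max_eq_left (by linarith), max_eq_left (by linarith)]; linarith
  rcases le_total x (2*h) with h3 | h3
  · rw [max_eq_right h1, max_eq_right (by linarith), max_eq_left (by linarith)]; linarith
  · rw [max_eq_right h1, max_eq_right (by linarith), max_eq_right (by linarith)]; linarith

lemma Rh_convexOn {h : ℝ} (hh : 0 < h) : ConvexOn ℝ univ (Rh h) := by
  refine convexOn_of_deriv2_nonneg convex_univ
    ((Rh_contDiff h).continuous.continuousOn)
    (fun x _ => ((Rh_hasDerivAt h x).differentiableAt).differentiableWithinAt)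
    ?_ ?_
  · intro x _
    rw [deriv_Rh]
    exact ((Rh1_hasDerivAt h x).differentiableAt).differentiableWithinAt
  · intro x _
    have e : deriv^[2] (Rh h) = Rh2 h := by
      rw [show (2:ℕ) = 1 + 1 from rfl, Function.iterate_succ, Function.iterate_one,
        Function.comp_apply, deriv_Rh, deriv_Rh1]
    rw [e]
    exact Rh2_nonneg hh x

lemma Rh_of_nonpos {h x : ℝ} (hx : x ≤ 0) (hh : 0 < h) : Rh h x = 0 := by
  rw [Rh, cube_of_nonpos hx, cube_of_nonpos (by linarith), cube_of_nonpos (by linarith)]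
  ring

lemma Rh2_of_nonpos {h x : ℝ} (hx : x ≤ 0) (hh : 0 < h) : Rh2 h x = 0 := by
  rw [Rh2, max_eq_left hx, max_eq_left (by linarith), max_eq_left (by linarith)]
  ring

lemma Rh_of_ge {h x : ℝ} (hh : 0 < h) (hx : 2*h ≤ x) : Rh h x = x - h := by
  rw [Rh, cube_of_nonneg (by linarith), cube_of_nonneg (by linarith),
    cube_of_nonneg (by linarith)]
  have : (6:ℝ) * h^2 ≠ 0 := by positivity
  field_simp
  ring

lemma Rh2_of_ge {h x : ℝ} (hh : 0 < h) (hx : 2*h ≤ x) : Rh2 h x = 0 := by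
  rw [Rh2, max_eq_right (by linarith), max_eq_right (by linarith), max_eq_right (by linarith)]
  field_simp
  ring

lemma Rh_approx {h : ℝ} (hh : 0 < h) (x : ℝ) : |Rh h x - max 0 x| ≤ 2 * h := by
  rcases le_total x 0 with h1 | h1
  · rw [Rh_of_nonpos h1 hh, max_eq_left h1]; simp; linarith
  rcases le_total (2*h) x with h3 | h3
  · rw [Rh_of_ge hh h3, max_eq_right h1]
    rw [abs_le]; constructor <;> linarith
  · -- 0 ≤ x ≤ 2h
    have hden : (0:ℝ) < 6 * h^2 := by positivity
    have hb : 0 ≤ Rh h x ∧ Rh h x ≤ 2 * h := by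
      rw [Rh, cube_of_nonneg h1, cube_of_nonpos (show x - 2*h ≤ 0 by linarith)]
      rcases le_total x h with h2 | h2
      · rw [cube_of_nonpos (show x - h ≤ 0 by linarith)]
        constructor
        · exact div_nonneg (by nlinarith [pow_nonneg h1 3]) hden.le
        · rw [div_le_iff₀ hden]
          nlinarith [pow_le_pow_left₀ h1 h2 3, pow_pos hh 3]
      · rw [cube_of_nonneg (show 0 ≤ x - h by linarith)]
        constructor
        · refine div_nonneg ?_ hden.le
          nlinarith [mul_nonneg (sq_nonneg (x-h)) (show (0:ℝ) ≤ 2*h - x by linarith),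
            mul_nonneg (show (0:ℝ) ≤ x - h by linarith) (sq_nonneg h),
            pow_pos hh 3]
        · rw [div_le_iff₀ hden]
          nlinarith [pow_le_pow_left₀ h1 h3 3, pow_nonneg (show (0:ℝ) ≤ x - h by linarith) 3,
            pow_pos hh 3]
    rw [max_eq_right h1, abs_le]; constructor <;> linarith


lemma affine_convexOn (p q r : ℝ) : ConvexOn ℝ (univ : Set ℝ) (fun x => p + q * (x - r)) := by
  refine ⟨convex_univ, ?_⟩
  intro x _ y _ α β hα hβ hs
  simp only [smul_eq_mul]
  exact le_of_eq (by linear_combination (q * r - p) * hs)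

lemma convexOn_comp_sub_const {f : ℝ → ℝ} (hf : ConvexOn ℝ (univ : Set ℝ) f) (k : ℝ) :
    ConvexOn ℝ (univ : Set ℝ) (fun x => f (x - k)) := by
  refine ⟨convex_univ, ?_⟩
  intro x _ y _ α β hα hβ hs
  have e : α • (x - k) + β • (y - k) = (α • x + β • y) - k := by
    simp only [smul_eq_mul]; linear_combination (-k) * hs
  have := hf.2 (mem_univ (x - k)) (mem_univ (y - k)) hα hβ hs
  rwa [e] at this

lemma convexOn_finset_sum {ι : Type*} (t : Finset ι) (F : ι → ℝ → ℝ)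
    (h : ∀ i ∈ t, ConvexOn ℝ (univ : Set ℝ) (F i)) :
    ConvexOn ℝ (univ : Set ℝ) (fun x => ∑ i ∈ t, F i x) := by
  classical
  induction t using Finset.induction_on with
  | empty => simpa using convexOn_const (0:ℝ) convex_univ
  | @insert i t hnot ih =>
    have h1 := h i (Finset.mem_insert_self i t)
    have h2 := ih fun j hj => h j (Finset.mem_insert_of_mem hj)
    have := h1.add h2
    simpa [Finset.sum_insert hnot, Pi.add_def] using this

set_option maxHeartbeats 1000000 in
theorem convex_approx_zero_bdry (a b : ℝ) (hab : a < b) (f : ℝ → ℝ)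
    (hconv : ConvexOn ℝ (Set.Icc a b) f) (hcont : ContinuousOn f (Set.Icc a b))
    (hfa : f a = 0) (hfb : f b = 0)
    (ε : ℝ) (hε : 0 < ε) :
    ∃ g : ℝ → ℝ, ConvexOn ℝ (Set.Icc a b) g ∧ ContDiffOn ℝ 2 g (Set.Icc a b) ∧
      g a = 0 ∧ g b = 0 ∧
      iteratedDerivWithin 2 g (Set.Icc a b) a = 0 ∧
      iteratedDerivWithin 2 g (Set.Icc a b) b = 0 ∧
      ∀ x ∈ Set.Icc a b, |f x - g x| < ε := by
  have hba : 0 < b - a := sub_pos.2 hab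
  set ω : ℝ := ε / 8 with hω
  have hωpos : 0 < ω := by positivity
  -- uniform continuity
  obtain ⟨η, hηpos, hη⟩ : ∃ η > 0, ∀ x ∈ Icc a b, ∀ y ∈ Icc a b, |x - y| < η → |f x - f y| < ω := by
    have := (isCompact_Icc (a := a) (b := b)).uniformContinuousOn_of_continuous hcont
    rw [Metric.uniformContinuousOn_iff] at this
    obtain ⟨δ, hδ, H⟩ := this ω hωpos
    exact ⟨δ, hδ, fun x hx y hy hxy => H x hx y hy (by rwa [Real.dist_eq])⟩
  -- number of intervals
  obtain ⟨n0, hn0⟩ := exists_nat_gt ((b - a) / η)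
  set n : ℕ := n0 + 1 with hn
  have hnpos : 0 < n := Nat.succ_pos _
  have hnR : (0:ℝ) < n := by exact_mod_cast hnpos
  set hstep : ℝ := (b - a) / n with hhstep
  have hstep_pos : 0 < hstep := by positivity
  have hstep_lt : hstep < η := by
    rw [hhstep, div_lt_iff₀ hnR]
    have : (b - a) / η < n := lt_of_lt_of_le hn0 (by exact_mod_cast Nat.le_succ n0)
    calc b - a = ((b-a)/η) * η := by field_simp
    _ < n * η := by apply mul_lt_mul_of_pos_right this hηpos
    _ = η * n := by ring
  set knot : ℕ → ℝ := fun i => a + i * hstep with hknot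
  have knot0 : knot 0 = a := by simp [hknot]
  have knotn : knot n = b := by
    simp only [hknot, hhstep]; field_simp; ring
  have knot_mem : ∀ i, i ≤ n → knot i ∈ Icc a b := by
    intro i hi
    constructor
    · simp only [hknot]; nlinarith [hstep_pos, (Nat.cast_nonneg i : (0:ℝ) ≤ i)]
    · have : (i:ℝ) ≤ n := by exact_mod_cast hi
      simp only [hknot, hhstep]
      rw [div_eq_iff (ne_of_gt hnR)] at *
      nlinarith [hstep_pos]
  have knot_succ : ∀ i : ℕ, knot (i+1) = knot i + hstep := by
    intro i; simp only [hknot]; push_cast; ring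
  set s : ℕ → ℝ := fun i => (f (knot (i+1)) - f (knot i)) / hstep with hs
  have s_mul : ∀ i, s i * hstep = f (knot (i+1)) - f (knot i) := by
    intro i; rw [hs]; field_simp
  set c : ℕ → ℝ := fun i => s i - s (i-1) with hc
  have c_nonneg : ∀ i ∈ Finset.Ico 1 n, 0 ≤ c i := by
    intro i hi
    rw [Finset.mem_Ico] at hi
    obtain ⟨j, rfl⟩ : ∃ j, i = j + 1 := ⟨i - 1, (Nat.succ_pred_eq_of_pos hi.1).symm⟩
    have hj2 : j + 2 ≤ n := hi.2
    have hmid : knot (j+1) = (knot j + knot (j+2)) / 2 := by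
      simp only [hknot]; push_cast; ring
    have h1 : knot j ∈ Icc a b := knot_mem j (by omega)
    have h2 : knot (j+2) ∈ Icc a b := knot_mem (j+2) (by omega)
    have hcx := hconv.2 h1 h2 (by norm_num : (0:ℝ) ≤ 1/2) (by norm_num : (0:ℝ) ≤ 1/2)
      (by norm_num)
    have hpt : (1/2:ℝ) • knot j + (1/2:ℝ) • knot (j+2) = knot (j+1) := by
      simp only [smul_eq_mul, hknot]; push_cast; ring
    rw [hpt] at hcx
    simp only [smul_eq_mul] at hcx
    have hcc : c (j+1) = s (j+1) - s j := by simp [hc]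
    rw [hcc, sub_nonneg, ← mul_le_mul_iff_of_pos_right hstep_pos, s_mul, s_mul]
    linarith
  -- choice of smoothing parameter
  set C : ℝ := ∑ i ∈ Finset.Ico 1 n, c i with hC
  have hCnn : 0 ≤ C := Finset.sum_nonneg c_nonneg
  set hρ : ℝ := min (hstep/2) (ε/(16*(C+1))) with hhρ
  have hρpos : 0 < hρ := lt_min (by positivity) (by positivity)
  have hρ_le : hρ ≤ hstep/2 := min_le_left _ _
  have hρC : 2 * hρ * C ≤ ω := by
    have h1 : hρ ≤ ε/(16*(C+1)) := min_le_right _ _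
    have h2 : 2 * hρ * C ≤ 2 * (ε/(16*(C+1))) * C := by
      apply mul_le_mul_of_nonneg_right _ hCnn
      linarith
    have h3 : 2 * (ε/(16*(C+1))) * C = ε * C/(8*(C+1)) := by
      field_simp; ring
    have h4 : ε * C/(8*(C+1)) ≤ ε/8 := by
      rw [div_le_div_iff₀ (by positivity) (by norm_num)]
      nlinarith
    rw [hω]; linarith
  -- the piecewise linear interpolant and its smooth version
  set L : ℝ → ℝ := fun x => f a + s 0 * (x - a) + ∑ i ∈ Finset.Ico 1 n, c i * max 0 (x - knot i)
    with hL
  set g0 : ℝ → ℝ := fun x => f a + s 0 * (x - a) + ∑ i ∈ Finset.Ico 1 n, c i * Rh hρ (x - knot i)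
    with hg0
  have hg0L : ∀ x, |g0 x - L x| ≤ 2 * hρ * C := by
    intro x
    have e : g0 x - L x = ∑ i ∈ Finset.Ico 1 n, c i * (Rh hρ (x - knot i) - max 0 (x - knot i)) := by
      have e1 : g0 x = f a + s 0 * (x - a) + ∑ i ∈ Finset.Ico 1 n, c i * Rh hρ (x - knot i) := rfl
      have e2 : L x = f a + s 0 * (x - a) + ∑ i ∈ Finset.Ico 1 n, c i * max 0 (x - knot i) := rfl
      rw [e1, e2]
      rw [show ∀ A S T : ℝ, A + S - (A + T) = S - T from fun A S T => by ring,
        ← Finset.sum_sub_distrib]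
      apply Finset.sum_congr rfl
      intro i _
      ring
    rw [e]
    calc |∑ i ∈ Finset.Ico 1 n, c i * (Rh hρ (x - knot i) - max 0 (x - knot i))|
        ≤ ∑ i ∈ Finset.Ico 1 n, |c i * (Rh hρ (x - knot i) - max 0 (x - knot i))| :=
          Finset.abs_sum_le_sum_abs _ _
    _ ≤ ∑ i ∈ Finset.Ico 1 n, c i * (2 * hρ) := by
        apply Finset.sum_le_sum
        intro i hi
        rw [abs_mul, abs_of_nonneg (c_nonneg i hi)]
        exact mul_le_mul_of_nonneg_left (Rh_approx hρpos _) (c_nonneg i hi)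
    _ = 2 * hρ * C := by rw [← Finset.sum_mul, ← hC]; ring
  -- the affine identity on pieces
  have akey : ∀ j, j + 1 ≤ n → ∀ x : ℝ,
      f a + s 0 * (x - a) + ∑ i ∈ Finset.Ico 1 (j+1), c i * (x - knot i)
        = f (knot j) + s j * (x - knot j) := by
    intro j
    induction j with
    | zero => intro _ x; simp [knot0]
    | succ j ih =>
      intro hj1 x
      have hsum : ∑ i ∈ Finset.Ico 1 (j+2), c i * (x - knot i)
          = (∑ i ∈ Finset.Ico 1 (j+1), c i * (x - knot i)) + c (j+1) * (x - knot (j+1)) := by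
        rw [Finset.sum_Ico_succ_top (by omega)]
      rw [hsum, ← add_assoc, ih (by omega) x]
      have hcc : c (j+1) = s (j+1) - s j := by simp [hc]
      have hfs : f (knot (j+1)) = f (knot j) + s j * hstep := by
        have := s_mul j; linarith
      rw [hcc, hfs, knot_succ j]
      ring
  -- evaluation of L on each piece
  have knot_mono : ∀ i k : ℕ, i ≤ k → knot i ≤ knot k := by
    intro i k hik
    simp only [hknot]
    have : (i:ℝ) ≤ k := by exact_mod_cast hik
    nlinarith [hstep_pos]
  have L_eval : ∀ j, j + 1 ≤ n → ∀ x, knot j ≤ x → x ≤ knot (j+1) →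
      L x = f (knot j) + s j * (x - knot j) := by
    intro j hj x hx1 hx2
    have hsplit : ∑ i ∈ Finset.Ico 1 n, c i * max 0 (x - knot i)
        = (∑ i ∈ Finset.Ico 1 (j+1), c i * max 0 (x - knot i))
          + ∑ i ∈ Finset.Ico (j+1) n, c i * max 0 (x - knot i) := by
      rw [Finset.sum_Ico_consecutive _ (by omega) hj]
    have h2z : ∑ i ∈ Finset.Ico (j+1) n, c i * max 0 (x - knot i) = 0 := by
      apply Finset.sum_eq_zero
      intro i hi
      rw [Finset.mem_Ico] at hi
      have : x - knot i ≤ 0 := by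
        have := knot_mono (j+1) i hi.1
        linarith
      rw [max_eq_left this, mul_zero]
    have h1e : ∑ i ∈ Finset.Ico 1 (j+1), c i * max 0 (x - knot i)
        = ∑ i ∈ Finset.Ico 1 (j+1), c i * (x - knot i) := by
      apply Finset.sum_congr rfl
      intro i hi
      rw [Finset.mem_Ico] at hi
      have : 0 ≤ x - knot i := by
        have := knot_mono i j (by omega)
        linarith
      rw [max_eq_right this]
    have eL : L x = f a + s 0 * (x - a) + ∑ i ∈ Finset.Ico 1 n, c i * max 0 (x - knot i) := rfl
    rw [eL, hsplit, h2z, h1e, add_zero, akey j hj x]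
  -- L approximates f
  have L_close : ∀ x ∈ Icc a b, |f x - L x| ≤ 2 * ω := by
    intro x hx
    set t : ℝ := (x - a) / hstep with ht
    have htnn : 0 ≤ t := div_nonneg (sub_nonneg.2 hx.1) hstep_pos.le
    set j : ℕ := min (n-1) ⌊t⌋₊ with hj
    have hjle : j ≤ n - 1 := min_le_left _ _
    have hj1 : j + 1 ≤ n := by omega
    have et : t * hstep = x - a := by rw [ht]; field_simp
    have hxlow : knot j ≤ x := by
      have hfloor : (⌊t⌋₊ : ℝ) ≤ t := Nat.floor_le htnn
      have hj' : (j:ℝ) ≤ (⌊t⌋₊:ℝ) := by exact_mod_cast min_le_right (n-1) ⌊t⌋₊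
      have h1 : (j:ℝ) ≤ t := le_trans hj' hfloor
      have : (j:ℝ) * hstep ≤ t * hstep := mul_le_mul_of_nonneg_right h1 hstep_pos.le
      simp only [hknot]; linarith
    have hxhigh : x ≤ knot (j+1) := by
      rcases le_or_gt (⌊t⌋₊) (n-1) with hcase | hcase
      · have hjeq : j = ⌊t⌋₊ := min_eq_right hcase
        have h2 : t < (⌊t⌋₊:ℝ) + 1 := Nat.lt_floor_add_one t
        have h3 : t < (j:ℝ) + 1 := by rw [hjeq]; exact_mod_cast h2
        have : t * hstep < ((j:ℝ)+1) * hstep := mul_lt_mul_of_pos_right h3 hstep_pos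
        simp only [hknot]; push_cast; linarith
      · have hjeq : j = n-1 := min_eq_left (by omega)
        have hjn : j + 1 = n := by omega
        rw [hjn, knotn]; exact hx.2
    have hk1 : knot j ∈ Icc a b := knot_mem j (by omega)
    have hk2 : knot (j+1) ∈ Icc a b := knot_mem (j+1) hj1
    have hks : knot (j+1) = knot j + hstep := knot_succ j
    have hd1 : |x - knot j| < η := by
      rw [abs_of_nonneg (by linarith)]
      linarith
    have hf1 : |f x - f (knot j)| < ω := hη x hx (knot j) hk1 hd1
    have hf2 : |f (knot (j+1)) - f (knot j)| < ω := by
      apply hη _ hk2 _ hk1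
      have e : knot (j+1) - knot j = hstep := by rw [hks]; ring
      rw [e, abs_of_pos hstep_pos]
      exact hstep_lt
    have hsj : |s j * (x - knot j)| ≤ |f (knot (j+1)) - f (knot j)| := by
      rw [← s_mul j, abs_mul, abs_mul]
      apply mul_le_mul_of_nonneg_left _ (abs_nonneg (s j))
      rw [abs_of_nonneg (by linarith : (0:ℝ) ≤ x - knot j), abs_of_pos hstep_pos]
      linarith
    have hLx := L_eval j hj1 x hxlow hxhigh
    rw [hLx]
    have e : f x - (f (knot j) + s j * (x - knot j))
        = (f x - f (knot j)) - s j * (x - knot j) := by ring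
    rw [e]
    calc |(f x - f (knot j)) - s j * (x - knot j)|
        ≤ |f x - f (knot j)| + |s j * (x - knot j)| := abs_sub _ _
    _ ≤ 2 * ω := by linarith
  -- endpoint values
  have g0a : g0 a = 0 := by
    have e1 : g0 a = f a + s 0 * (a - a) + ∑ i ∈ Finset.Ico 1 n, c i * Rh hρ (a - knot i) := rfl
    rw [e1, hfa]
    have hz : ∀ i ∈ Finset.Ico 1 n, c i * Rh hρ (a - knot i) = 0 := by
      intro i hi
      rw [Finset.mem_Ico] at hi
      have h1 : knot 0 ≤ knot i := knot_mono 0 i (by omega)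
      rw [knot0] at h1
      rw [Rh_of_nonpos (by linarith) hρpos, mul_zero]
    rw [Finset.sum_eq_zero hz]; ring
  have Lb : L b = 0 := by
    have h1 : n - 1 + 1 = n := by omega
    have hlo : knot (n-1) ≤ b := by
      have := knot_mem (n-1) (by omega); exact this.2
    have hhi : b ≤ knot (n-1+1) := by rw [h1, knotn]
    have := L_eval (n-1) (by omega) b hlo hhi
    rw [this]
    have e2 : b - knot (n-1) = hstep := by
      have := knot_succ (n-1); rw [h1, knotn] at this; linarith
    have e3 : s (n-1) * hstep = f (knot (n-1+1)) - f (knot (n-1)) := s_mul (n-1)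
    rw [h1, knotn, hfb] at e3
    rw [e2]
    linarith
  set β : ℝ := g0 b with hβdef
  have hβ : |β| ≤ 2 * hρ * C := by
    have := hg0L b; rwa [Lb, sub_zero] at this
  set G : ℝ → ℝ := fun x => f a + (s 0 - β/(b-a)) * (x - a)
      + ∑ i ∈ Finset.Ico 1 n, c i * Rh hρ (x - knot i) with hG
  have Gg0 : ∀ x, G x = g0 x - β/(b-a) * (x - a) := by
    intro x
    have e1 : G x = f a + (s 0 - β/(b-a)) * (x - a)
        + ∑ i ∈ Finset.Ico 1 n, c i * Rh hρ (x - knot i) := rfl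
    have e2 : g0 x = f a + s 0 * (x - a) + ∑ i ∈ Finset.Ico 1 n, c i * Rh hρ (x - knot i) := rfl
    rw [e1, e2]; ring
  have Ga : G a = 0 := by rw [Gg0, g0a]; ring
  have Gb : G b = 0 := by
    rw [Gg0]
    field_simp
    simp [hβdef]
  -- convexity
  have Gconv : ConvexOn ℝ univ G := by
    have h1 : ConvexOn ℝ univ (fun x => f a + (s 0 - β/(b-a)) * (x - a)) :=
      affine_convexOn _ _ _
    have h2 : ConvexOn ℝ univ (fun x => ∑ i ∈ Finset.Ico 1 n, c i * Rh hρ (x - knot i)) := by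
      apply convexOn_finset_sum
      intro i hi
      have hterm := (convexOn_comp_sub_const (Rh_convexOn hρpos) (knot i)).smul (c_nonneg i hi)
      exact hterm
    exact h1.add h2
  -- smoothness
  have Gcd : ContDiff ℝ 2 G := by
    rw [hG]
    apply ContDiff.add
    · exact contDiff_const.add (contDiff_const.mul (contDiff_id.sub contDiff_const))
    · apply ContDiff.sum
      intro i _
      exact contDiff_const.mul ((Rh_contDiff hρ).comp (contDiff_id.sub contDiff_const))
  -- derivatives
  set G1 : ℝ → ℝ := fun x => (s 0 - β/(b-a))
      + ∑ i ∈ Finset.Ico 1 n, c i * Rh1 hρ (x - knot i) with hG1def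
  set G2 : ℝ → ℝ := fun x => ∑ i ∈ Finset.Ico 1 n, c i * Rh2 hρ (x - knot i) with hG2def
  have hDG : ∀ x, HasDerivAt G (G1 x) x := by
    intro x
    have hsum : HasDerivAt (fun y => ∑ i ∈ Finset.Ico 1 n, c i * Rh hρ (y - knot i))
        (∑ i ∈ Finset.Ico 1 n, c i * Rh1 hρ (x - knot i)) x := by
      apply HasDerivAt.fun_sum
      intro i _
      have h := ((Rh_hasDerivAt hρ (x - knot i)).comp x
        ((hasDerivAt_id x).sub_const (knot i))).const_mul (c i)
      simpa using h
    have haff : HasDerivAt (fun y => f a + (s 0 - β/(b-a)) * (y - a)) (s 0 - β/(b-a)) x := by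
      simpa [Pi.add_def] using (hasDerivAt_const x (f a)).add
        (((hasDerivAt_id x).sub_const a).const_mul (s 0 - β/(b-a)))
    exact haff.add hsum
  have hDG1 : ∀ x, HasDerivAt G1 (G2 x) x := by
    intro x
    have hsum : HasDerivAt (fun y => ∑ i ∈ Finset.Ico 1 n, c i * Rh1 hρ (y - knot i))
        (∑ i ∈ Finset.Ico 1 n, c i * Rh2 hρ (x - knot i)) x := by
      apply HasDerivAt.fun_sum
      intro i _
      have h := ((Rh1_hasDerivAt hρ (x - knot i)).comp x
        ((hasDerivAt_id x).sub_const (knot i))).const_mul (c i)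
      simpa using h
    have haff : HasDerivAt (fun _ : ℝ => (s 0 - β/(b-a))) 0 x := hasDerivAt_const _ _
    have := haff.add hsum
    exact this.congr_deriv (zero_add _)
  have hu : UniqueDiffOn ℝ (Icc a b) := uniqueDiffOn_Icc hab
  have iter2 : ∀ x ∈ Icc a b, iteratedDerivWithin 2 G (Icc a b) x = G2 x := by
    intro x hx
    have h1 : EqOn (derivWithin G (Icc a b)) G1 (Icc a b) := by
      intro y hy
      rw [(hDG y).differentiableAt.derivWithin (hu y hy)]
      exact (hDG y).deriv
    have e1 : iteratedDerivWithin 2 G (Icc a b) x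
        = derivWithin (derivWithin G (Icc a b)) (Icc a b) x := by
      rw [show (2:ℕ) = 1 + 1 from rfl, iteratedDerivWithin_succ',
        iteratedDerivWithin_one]
    rw [e1, derivWithin_congr h1 (h1 hx),
      (hDG1 x).differentiableAt.derivWithin (hu x hx)]
    exact (hDG1 x).deriv
  have G2a : G2 a = 0 := by
    have e : G2 a = ∑ i ∈ Finset.Ico 1 n, c i * Rh2 hρ (a - knot i) := rfl
    rw [e]
    apply Finset.sum_eq_zero
    intro i hi
    rw [Finset.mem_Ico] at hi
    have h1 : knot 0 ≤ knot i := knot_mono 0 i (by omega)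
    rw [knot0] at h1
    rw [Rh2_of_nonpos (by linarith) hρpos, mul_zero]
  have G2b : G2 b = 0 := by
    have e : G2 b = ∑ i ∈ Finset.Ico 1 n, c i * Rh2 hρ (b - knot i) := rfl
    rw [e]
    apply Finset.sum_eq_zero
    intro i hi
    rw [Finset.mem_Ico] at hi
    have h1 : knot (i+1) ≤ knot n := knot_mono (i+1) n (by omega)
    rw [knotn] at h1
    have h2 : knot (i+1) = knot i + hstep := knot_succ i
    have h3 : 2 * hρ ≤ b - knot i := by linarith
    rw [Rh2_of_ge hρpos h3, mul_zero]
  -- final bound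
  refine ⟨G, Gconv.subset (subset_univ _) (convex_Icc a b), Gcd.contDiffOn, Ga, Gb,
    by rw [iter2 a (left_mem_Icc.2 hab.le)]; exact G2a,
    by rw [iter2 b (right_mem_Icc.2 hab.le)]; exact G2b, ?_⟩
  intro x hx
  have h1 : |f x - L x| ≤ 2 * ω := L_close x hx
  have h2 : |L x - g0 x| ≤ 2 * hρ * C := by
    rw [abs_sub_comm]; exact hg0L x
  have h3 : |g0 x - G x| ≤ |β| := by
    rw [Gg0 x]
    have e : g0 x - (g0 x - β/(b-a) * (x - a)) = β/(b-a) * (x - a) := by ring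
    rw [e, abs_mul, abs_div, abs_of_pos hba, abs_of_nonneg (sub_nonneg.2 hx.1)]
    rw [div_mul_eq_mul_div, div_le_iff₀ hba]
    have : x - a ≤ b - a := by linarith [hx.2]
    nlinarith [abs_nonneg β]
  have : |f x - G x| ≤ |f x - L x| + |L x - g0 x| + |g0 x - G x| := by
    have e : f x - G x = (f x - L x) + (L x - g0 x) + (g0 x - G x) := by ring
    rw [e]
    exact (abs_add_le _ _).trans (by linarith [abs_add_le (f x - L x) (L x - g0 x)])
  have hfinal : |f x - G x| ≤ 4 * ω := by
    linarith
  have : (4:ℝ) * ω < ε := by rw [hω]; linarith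
  linarith
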